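/- Let d ≥ 3 and w ≥ d + 1 be integers, let e₁, …, e_d be the standard basis of ℝ^d, and define P(d,w,k) as the convex hull of the set {0} ∪ {e_i : 1 ≤ i ≤ d−1} ∪ {−j·e_d : 1 ≤ j ≤ w−d−1} ∪ {e₁ + ⋯ + e_{d−1} + k·e_d}. If k ≥ (d−2)(w−d−1), then v(P(d,w,k)) = (k + w − d − 1)/d!. -/

import Mathlib

open MeasureTheory

noncomputable section

/-- The canonical embedding of integer vectors into real vectors. -/
def intVec {d : ℕ} (x : Fin d → ℤ) : Fin d → ℝ := fun i => (x i : ℝ)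

/-- `P` is a convex lattice polytope: the convex hull of a finite set of lattice points. -/
def IsConvexLatticePolytope (d : ℕ) (P : Set (Fin d → ℝ)) : Prop :=
  ∃ V : Finset (Fin d → ℤ), P = convexHull ℝ (intVec '' (V : Set (Fin d → ℤ)))

/-- `P` is `d`-dimensional: its affine span is all of `ℝ^d`. -/
def IsFullDim (d : ℕ) (P : Set (Fin d → ℝ)) : Prop :=
  affineSpan ℝ P = ⊤

/-- The set of lattice points of `P`. -/
def latticePts (d : ℕ) (P : Set (Fin d → ℝ)) : Set (Fin d → ℤ) :=
  {x | intVec x ∈ P}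

/-- The lattice `ℤ^d` viewed inside `ℝ^d`. -/
def latticeSet (d : ℕ) : Set (Fin d → ℝ) := Set.range (intVec (d := d))

/-- Two subsets of `ℝ^d` are lattice-equivalent if some affine bijection of `ℝ^d`
preserving `ℤ^d` maps one onto the other. -/
def LatticeEquiv (d : ℕ) (P₁ P₂ : Set (Fin d → ℝ)) : Prop :=
  ∃ σ : (Fin d → ℝ) ≃ᵃ[ℝ] (Fin d → ℝ), σ '' latticeSet d = latticeSet d ∧ P₂ = σ '' P₁

/-- The type of equivalence classes of `d`-dimensional convex lattice polytopes
satisfying the predicate `Q`, modulo lattice equivalence. -/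
def ClassesType (d : ℕ) (Q : Set (Fin d → ℝ) → Prop) : Type :=
  Quot (fun P₁ P₂ : {P : Set (Fin d → ℝ) // IsConvexLatticePolytope d P ∧ IsFullDim d P ∧ Q P} =>
    LatticeEquiv d P₁.1 P₂.1)

/-- `P` is centrally symmetric (with some center `c`, i.e. `P = 2c - P`). -/
def IsCentrallySymmetric (d : ℕ) (P : Set (Fin d → ℝ)) : Prop :=
  ∃ c : Fin d → ℝ, ∀ x, x ∈ P ↔ (2 : ℝ) • c - x ∈ P

open MeasureTheory

lemma cornerSimplex_measurable (n : ℕ) (c : ℝ) :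
    MeasurableSet {x : Fin n → ℝ | (∀ i, 0 ≤ x i) ∧ ∑ i, x i ≤ c} := by
  have : {x : Fin n → ℝ | (∀ i, 0 ≤ x i) ∧ ∑ i, x i ≤ c}
      = (⋂ i, {x : Fin n → ℝ | 0 ≤ x i}) ∩ {x | ∑ i, x i ≤ c} := by
    ext x; simp
  rw [this]
  apply MeasurableSet.inter
  · exact MeasurableSet.iInter fun i => measurableSet_le measurable_const (measurable_pi_apply i)
  · exact measurableSet_le (Finset.measurable_sum _ fun i _ => measurable_pi_apply i) measurable_const

lemma cornerSimplex_volume (n : ℕ) (c : ℝ) :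
    volume {x : Fin n → ℝ | (∀ i, 0 ≤ x i) ∧ ∑ i, x i ≤ c}
      = if 0 ≤ c then ENNReal.ofReal (c ^ n / n.factorial) else 0 := by
  induction n generalizing c with
  | zero =>
    by_cases h : 0 ≤ c
    · simp only [h, if_true]
      have : {x : Fin 0 → ℝ | (∀ i, 0 ≤ x i) ∧ ∑ i, x i ≤ c} = Set.univ := by
        ext x; simp [h]
      rw [this, volume_pi, Measure.pi_univ]; simp
    · have : {x : Fin 0 → ℝ | (∀ i, 0 ≤ x i) ∧ ∑ i, x i ≤ c} = ∅ := by
        ext x; simp; linarith [not_le.mp h]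
      rw [this]; simp [h]
  | succ n ih =>
    by_cases h : 0 ≤ c
    swap
    · have : {x : Fin (n+1) → ℝ | (∀ i, 0 ≤ x i) ∧ ∑ i, x i ≤ c} = ∅ := by
        ext x
        simp only [Set.mem_setOf_eq, Set.mem_empty_iff_false, iff_false, not_and]
        intro hx hs
        have : (0:ℝ) ≤ ∑ i, x i := Finset.sum_nonneg fun i _ => hx i
        linarith
      rw [this]; simp [h]
    simp only [h, if_true]
    set T : Set (ℝ × (Fin n → ℝ)) :=
      {p | 0 ≤ p.1 ∧ (∀ i, 0 ≤ p.2 i) ∧ p.1 + ∑ i, p.2 i ≤ c} with hT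
    have hTm : MeasurableSet T := by
      have : T = {p : ℝ × (Fin n → ℝ) | 0 ≤ p.1} ∩ ((⋂ i, {p : ℝ × (Fin n → ℝ) | 0 ≤ p.2 i})
          ∩ {p : ℝ × (Fin n → ℝ) | p.1 + ∑ i, p.2 i ≤ c}) := by
        ext p; simp [hT, and_assoc]
      rw [this]
      apply MeasurableSet.inter
      · exact measurableSet_le measurable_const measurable_fst
      apply MeasurableSet.inter
      · exact MeasurableSet.iInter fun i =>
          measurableSet_le measurable_const (measurable_snd.eval)
      · exact measurableSet_le
          (measurable_fst.add (Finset.measurable_sum _ fun i _ => measurable_snd.eval))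
          measurable_const
    have hmp := measurePreserving_piFinSuccAbove (fun _ : Fin (n+1) => (volume : Measure ℝ)) 0
    have hpre : {x : Fin (n+1) → ℝ | (∀ i, 0 ≤ x i) ∧ ∑ i, x i ≤ c}
        = (MeasurableEquiv.piFinSuccAbove (fun _ => ℝ) 0) ⁻¹' T := by
      ext x
      simp only [Set.mem_setOf_eq, Set.mem_preimage, MeasurableEquiv.piFinSuccAbove_apply, hT]
      rw [Fin.forall_fin_succ, Fin.sum_univ_succ]
      constructor
      · rintro ⟨⟨h0, hs⟩, hsum⟩
        exact ⟨h0, fun i => hs i, by simpa [Fin.succAbove, Fin.tail] using hsum⟩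
      · rintro ⟨h0, hs, hsum⟩
        refine ⟨⟨h0, fun i => by simpa [Fin.succAbove, Fin.tail] using hs i⟩, ?_⟩
        simpa [Fin.succAbove, Fin.tail] using hsum
    rw [hpre, volume_pi, hmp.measure_preimage hTm.nullMeasurableSet]
    have : ((volume : Measure ℝ).prod (Measure.pi fun _ : Fin n => (volume : Measure ℝ))) T
        = ∫⁻ t : ℝ, (Measure.pi fun _ : Fin n => (volume : Measure ℝ)) (Prod.mk t ⁻¹' T) := by
      exact Measure.prod_apply hTm
    rw [this]
    have hslice : ∀ t : ℝ, (Measure.pi fun _ : Fin n => (volume : Measure ℝ)) (Prod.mk t ⁻¹' T)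
        = Set.indicator (Set.Icc (0:ℝ) c) (fun t => ENNReal.ofReal ((c - t) ^ n / n.factorial)) t := by
      intro t
      have : Prod.mk t ⁻¹' T = if 0 ≤ t then {x : Fin n → ℝ | (∀ i, 0 ≤ x i) ∧ ∑ i, x i ≤ c - t} else ∅ := by
        by_cases ht : 0 ≤ t
        · ext x
          simp only [Set.mem_preimage, hT, Set.mem_setOf_eq, ht, true_and, if_pos ht]
          constructor
          · rintro ⟨h1, h2⟩; exact ⟨h1, by linarith⟩
          · rintro ⟨h1, h2⟩; exact ⟨h1, by linarith⟩
        · ext x; simp [hT, ht]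
      rw [this]
      by_cases ht : 0 ≤ t
      · rw [if_pos ht, ← volume_pi, ih (c - t)]
        by_cases htc : t ≤ c
        · rw [if_pos (by linarith : (0:ℝ) ≤ c - t), Set.indicator_of_mem (Set.mem_Icc.mpr ⟨ht, htc⟩)]
        · rw [if_neg (by intro hh; exact htc (by linarith)), Set.indicator_of_notMem (by simp [Set.mem_Icc, ht, htc])]
      · rw [if_neg ht]
        simp [Set.indicator_of_notMem, ht]
    simp_rw [hslice]
    rw [lintegral_indicator measurableSet_Icc]
    have hcont : ContinuousOn (fun t : ℝ => (c - t) ^ n / n.factorial) (Set.Icc 0 c) :=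
      (((continuous_const.sub continuous_id).pow n).div_const _).continuousOn
    rw [← ofReal_integral_eq_lintegral_ofReal (hcont.integrableOn_Icc)
      (ae_restrict_of_forall_mem measurableSet_Icc fun t ht =>
        div_nonneg (pow_nonneg (by linarith [ht.2]) n) (by positivity))]
    congr 1
    rw [MeasureTheory.integral_Icc_eq_integral_Ioc, ← intervalIntegral.integral_of_le h]
    have h1 : ∫ t in (0:ℝ)..c, (c - t) ^ n / n.factorial
        = (∫ t in (0:ℝ)..c, (c - t) ^ n) / n.factorial := by
      rw [intervalIntegral.integral_div]
    rw [h1]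
    have h2 : (∫ t in (0:ℝ)..c, (c - t) ^ n) = ∫ u in (0:ℝ)..c, u ^ n := by
      have := intervalIntegral.integral_comp_sub_left (a := (0:ℝ)) (b := c) (fun u => u ^ n) c
      simpa using this
    rw [h2, integral_pow, zero_pow (Nat.succ_ne_zero n), sub_zero, Nat.factorial_succ]
    have hf : (0:ℝ) < n.factorial := by positivity
    push_cast
    field_simp


def stdCorner (d : ℕ) : Set (Fin d → ℝ) := {x | (∀ i, 0 ≤ x i) ∧ ∑ i, x i ≤ 1}

lemma stdCorner_convex (d : ℕ) : Convex ℝ (stdCorner d) := by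
  rintro x ⟨hx0, hx1⟩ y ⟨hy0, hy1⟩ a b ha hb hab
  constructor
  · intro i
    have h : (a • x + b • y) i = a * x i + b * y i := by simp
    rw [h]
    have := hx0 i; have := hy0 i
    nlinarith
  · have h : ∑ i, (a • x + b • y) i = a * ∑ i, x i + b * ∑ i, y i := by
      simp [Finset.sum_add_distrib, Finset.mul_sum]
    rw [h]
    nlinarith

lemma stdCorner_eq_convexHull (d : ℕ) :
    stdCorner d = convexHull ℝ ({0} ∪ {x : Fin d → ℝ | ∃ i, x = Pi.single i 1}) := by
  apply le_antisymm
  · intro x hx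
    obtain ⟨hx0, hx1⟩ := hx
    have hxrw : x = ∑ i : Fin d, x i • (Pi.single i 1 : Fin d → ℝ) := by
      funext j
      rw [Finset.sum_apply]
      simp [Pi.single_apply, mul_ite]
    have hsum : ∑ o : Option (Fin d), Option.elim o (1 - ∑ i, x i) x = 1 := by
      rw [Fintype.sum_option]; simp
    have h := Finset.centerMass_mem_convexHull (R := ℝ) (E := Fin d → ℝ)
      (t := (Finset.univ : Finset (Option (Fin d))))
      (w := fun o => Option.elim o (1 - ∑ i, x i) x)
      (s := ({0} ∪ {x : Fin d → ℝ | ∃ i, x = Pi.single i 1}))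
      (z := fun o => Option.elim o 0 (fun i => Pi.single i 1))
      (by rintro (_|i) _
          · simpa using hx1
          · exact hx0 i)
      (by rw [hsum]; norm_num)
      (by rintro (_|i) _
          · exact Or.inl rfl
          · exact Or.inr ⟨i, rfl⟩)
    rw [Finset.centerMass_eq_of_sum_1 _ _ hsum, Fintype.sum_option] at h
    simpa using (hxrw ▸ (by simpa using h) : _)
  · apply convexHull_min _ (stdCorner_convex d)
    rintro x (rfl | ⟨i, rfl⟩)
    · exact ⟨fun i => le_refl 0, by simp⟩
    · constructor
      · intro j
        by_cases h : j = i <;> simp [h, Pi.single_apply]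
      · simp [Pi.single_apply]


def colMat (d : ℕ) (L : Fin d) (u : Fin d → ℝ) : Matrix (Fin d) (Fin d) ℝ :=
  (1 : Matrix (Fin d) (Fin d) ℝ).updateCol L u

lemma colMat_det (d : ℕ) (L : Fin d) (u : Fin d → ℝ) : (colMat d L u).det = u L := by
  rw [colMat, ← Matrix.cramer_apply, Matrix.cramer_one]
  rfl

lemma colMat_mulVec (d : ℕ) (L : Fin d) (u : Fin d → ℝ) (c : Fin d → ℝ) (r : Fin d) :
    (colMat d L u).mulVec c r = u r * c L + (if r = L then 0 else c r) := by
  rw [colMat, Matrix.mulVec]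
  simp only [dotProduct, Matrix.updateCol_apply, Matrix.one_apply]
  rw [← Finset.add_sum_erase _ _ (Finset.mem_univ L), if_pos rfl]
  congr 1
  have h1 : ∀ j ∈ Finset.univ.erase L,
      (if j = L then u r else if r = j then 1 else 0) * c j
        = if r = j then c j else 0 := by
    intro j hj
    rw [if_neg (Finset.ne_of_mem_erase hj)]
    by_cases h : r = j <;> simp [h]
  rw [Finset.sum_congr rfl h1, Finset.sum_ite_eq]
  by_cases hr : r = L
  · simp [hr]
  · simp [Finset.mem_erase, hr]

lemma colMat_single (d : ℕ) (L : Fin d) (u : Fin d → ℝ) (i : Fin d) :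
    (colMat d L u).mulVec (Pi.single i 1) = if i = L then u else Pi.single i 1 := by
  funext r
  rw [colMat_mulVec]
  by_cases hi : i = L
  · subst hi
    simp [Pi.single_apply]
  · rw [if_neg hi]
    by_cases hr : r = L
    · subst hr
      simp [Pi.single_apply, Ne.symm hi]
    · simp [Pi.single_apply, hr, Ne.symm hi]

lemma colMat_zero (d : ℕ) (L : Fin d) (u : Fin d → ℝ) :
    (colMat d L u).mulVec 0 = 0 := by
  simp [Matrix.mulVec_zero]

lemma colMat_image_volume (d : ℕ) (L : Fin d) (u : Fin d → ℝ) :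
    volume (Matrix.toLin' (colMat d L u) '' stdCorner d)
      = ENNReal.ofReal (|u L| / d.factorial) := by
  rw [Measure.addHaar_image_linearMap, LinearMap.det_toLin', colMat_det]
  have h : stdCorner d = {x : Fin d → ℝ | (∀ i, 0 ≤ x i) ∧ ∑ i, x i ≤ (1:ℝ)} := rfl
  rw [h, cornerSimplex_volume d 1, if_pos (by norm_num),
    ← ENNReal.ofReal_mul (abs_nonneg _), one_pow]
  congr 1
  field_simp
open MeasureTheory
section
variable {E : Type*} [AddCommGroup E] [Module ℝ E]

lemma convexHull_eq_of_subsets {s t : Set E} (h1 : s ⊆ convexHull ℝ t)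
    (h2 : t ⊆ convexHull ℝ s) : convexHull ℝ s = convexHull ℝ t :=
  le_antisymm (convexHull_min h1 (convex_convexHull ℝ t))
    (convexHull_min h2 (convex_convexHull ℝ s))
end
lemma image_corner_eq (d : ℕ) (L : Fin d) (u : Fin d → ℝ) :
    Matrix.toLin' (colMat d L u) '' stdCorner d
      = convexHull ℝ ({0} ∪ {x | ∃ i, i ≠ L ∧ x = Pi.single i 1} ∪ {u}) := by
  rw [stdCorner_eq_convexHull, LinearMap.image_convexHull]
  congr 1
  ext x
  simp only [Set.mem_image, Set.mem_union, Set.mem_singleton_iff, Set.mem_setOf_eq]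
  constructor
  · rintro ⟨y, hy, rfl⟩
    rcases hy with (rfl | ⟨i, rfl⟩)
    · left; left; simp [Matrix.toLin'_apply, Matrix.mulVec_zero]
    · rw [Matrix.toLin'_apply, colMat_single]
      by_cases hi : i = L
      · right; simp [hi]
      · left; right; exact ⟨i, hi, by simp [hi]⟩
  · rintro ((rfl | ⟨i, hi, rfl⟩) | rfl)
    · exact ⟨0, Or.inl rfl, by simp [Matrix.toLin'_apply, Matrix.mulVec_zero]⟩
    · exact ⟨Pi.single i 1, Or.inr ⟨i, rfl⟩,
        by rw [Matrix.toLin'_apply, colMat_single, if_neg hi]⟩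
    · exact ⟨Pi.single L 1, Or.inr ⟨L, rfl⟩,
        by rw [Matrix.toLin'_apply, colMat_single, if_pos rfl]⟩

set_option maxHeartbeats 1200000

/-- The polytope `P(d,w,k)`: the convex hull of `0`, the basis vectors
`e₁, …, e_{d-1}`, the points `-j·e_d` for `1 ≤ j ≤ w - d - 1`, and the point
`e₁ + ⋯ + e_{d-1} + k·e_d` (here `e_d` is the last coordinate direction). -/
def Pdwk (d w : ℕ) (k : ℤ) : Set (Fin d → ℝ) :=
  convexHull ℝ ({0} ∪ {x | ∃ i : Fin d, (i : ℕ) < d - 1 ∧ x = Pi.single i 1}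
    ∪ {x | ∃ j : ℕ, 1 ≤ j ∧ j ≤ w - d - 1 ∧
        x = fun i : Fin d => if (i : ℕ) = d - 1 then -(j : ℝ) else 0}
    ∪ {fun i : Fin d => if (i : ℕ) = d - 1 then (k : ℝ) else 1})

/-- For `d ≥ 3`, `w ≥ d + 1` and `k ≥ (d-2)(w-d-1)`, the polytope `P(d,w,k)` has
volume `(k + w - d - 1)/d!`. -/
theorem Pdwk_volume (d w : ℕ) (k : ℤ) (hd : 3 ≤ d) (hw : d + 1 ≤ w)
    (hk : ((d : ℤ) - 2) * ((w : ℤ) - d - 1) ≤ k) :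
    volume (Pdwk d w k) =
      ENNReal.ofReal (((k : ℝ) + (w : ℝ) - (d : ℝ) - 1) / (d.factorial : ℝ)) := by
  set L : Fin d := ⟨d - 1, by omega⟩ with hLdef
  have hL : (L : ℕ) = d - 1 := rfl
  set m : ℕ := w - d - 1 with hm
  have hmz : (m : ℤ) = (w : ℤ) - d - 1 := by omega
  have hmr : (m : ℝ) = (w : ℝ) - d - 1 := by exact_mod_cast congrArg (Int.cast : ℤ → ℝ) hmz
  have hkz : ((d : ℤ) - 2) * m ≤ k := by rw [hmz]; exact hk
  have hkr : ((d : ℝ) - 2) * m ≤ k := by exact_mod_cast hkz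
  have hk0 : (0 : ℤ) ≤ k :=
    le_trans (mul_nonneg (by omega) (by positivity)) hkz
  have hk0r : (0 : ℝ) ≤ (k : ℝ) := by exact_mod_cast hk0
  have hdr : (3 : ℝ) ≤ (d : ℝ) := by exact_mod_cast hd
  have hm0r : (0 : ℝ) ≤ (m : ℝ) := Nat.cast_nonneg m
  set v : Fin d → ℝ := fun i : Fin d => if (i : ℕ) = d - 1 then (k : ℝ) else 1 with hv
  set a : Fin d → ℝ := fun i : Fin d => if (i : ℕ) = d - 1 then -(m : ℝ) else 0 with ha
  have hiL : ∀ i : Fin d, ((i : ℕ) = d - 1) ↔ i = L := by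
    intro i; rw [Fin.ext_iff]
  have hvL : v L = k := by simp [hv, hL]
  have hvne : ∀ i : Fin d, i ≠ L → v i = 1 := by
    intro i hi; rw [hv]; exact if_neg (fun h => hi ((hiL i).mp h))
  have haL : a L = -(m : ℝ) := by simp [ha, hL]
  have hane : ∀ i : Fin d, i ≠ L → a i = 0 := by
    intro i hi; rw [ha]; exact if_neg (fun h => hi ((hiL i).mp h))
  -- the sets
  set A : Set (Fin d → ℝ) := {x | ∃ i : Fin d, (i : ℕ) < d - 1 ∧ x = Pi.single i 1} with hA
  have hAiff : {x : Fin d → ℝ | ∃ i, i ≠ L ∧ x = Pi.single i 1} = A := by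
    ext x
    constructor
    · rintro ⟨i, hi, rfl⟩
      refine ⟨i, ?_, rfl⟩
      have h1 : (i : ℕ) ≠ d - 1 := fun hh => hi ((hiL i).mp hh)
      have h2 := i.isLt
      omega
    · rintro ⟨i, hi, rfl⟩
      refine ⟨i, fun h => ?_, rfl⟩
      rw [← hiL i] at h
      omega
  -- the two simplices
  set S1 : Set (Fin d → ℝ) := Matrix.toLin' (colMat d L v) '' stdCorner d with hS1def
  set S2 : Set (Fin d → ℝ) := Matrix.toLin' (colMat d L a) '' stdCorner d with hS2def
  have hS1 : S1 = convexHull ℝ ({0} ∪ A ∪ {v}) := by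
    rw [hS1def, image_corner_eq, hAiff]
  have hS2 : S2 = convexHull ℝ ({0} ∪ A ∪ {a}) := by
    rw [hS2def, image_corner_eq, hAiff]
  have hvolS1 : volume S1 = ENNReal.ofReal ((k : ℝ) / d.factorial) := by
    rw [hS1def, colMat_image_volume, hvL, abs_of_nonneg hk0r]
  have hvolS2 : volume S2 = ENNReal.ofReal ((m : ℝ) / d.factorial) := by
    rw [hS2def, colMat_image_volume, haL, abs_neg, abs_of_nonneg hm0r]
  -- Pdwk as hull of {0} ∪ A ∪ {v} ∪ {a}
  have hPd : Pdwk d w k = convexHull ℝ (({0} ∪ A ∪ {v}) ∪ {a}) := by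
    rw [Pdwk]
    apply convexHull_eq_of_subsets
    · rintro x (((rfl | hx) | ⟨j, hj1, hj2, rfl⟩) | rfl)
      · exact subset_convexHull ℝ _ (Or.inl (Or.inl (Or.inl rfl)))
      · exact subset_convexHull ℝ _ (Or.inl (Or.inl (Or.inr hx)))
      · have hm1 : 1 ≤ m := by omega
        have hmpos : (0 : ℝ) < (m : ℝ) := by exact_mod_cast Nat.lt_of_lt_of_le Nat.zero_lt_one hm1
        have hjm : (j : ℝ) ≤ (m : ℝ) := by exact_mod_cast (by omega : j ≤ m)
        have h0m : (0 : Fin d → ℝ) ∈ convexHull ℝ (({0} ∪ A ∪ {v}) ∪ {a}) :=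
          subset_convexHull ℝ _ (Or.inl (Or.inl (Or.inl rfl)))
        have ham : a ∈ convexHull ℝ (({0} ∪ A ∪ {v}) ∪ {a}) :=
          subset_convexHull ℝ _ (Or.inr rfl)
        have hcomb := (convex_convexHull ℝ (({0} ∪ A ∪ {v}) ∪ {a})) h0m ham
            (by rw [sub_nonneg]; exact div_le_one_of_le₀ hjm (le_of_lt hmpos) : (0:ℝ) ≤ 1 - (j:ℝ)/m) (by positivity : (0:ℝ) ≤ (j:ℝ)/m) (by ring)
        have hmn : (m:ℝ) ≠ 0 := ne_of_gt hmpos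
        have hpt : (fun i : Fin d => if (i:ℕ) = d - 1 then -(j:ℝ) else 0)
            = (1 - (j:ℝ)/m) • (0 : Fin d → ℝ) + ((j:ℝ)/m) • a := by
          funext i
          simp only [Pi.add_apply, Pi.smul_apply, smul_eq_mul, Pi.zero_apply, mul_zero, zero_add, ha]
          by_cases hc : (i:ℕ) = d - 1
          · rw [if_pos hc, if_pos hc]
            field_simp
          · rw [if_neg hc, if_neg hc, mul_zero]
        rw [hpt]
        exact hcomb
      · exact subset_convexHull ℝ _ (Or.inl (Or.inr rfl))
    · rintro x (((rfl | hx) | rfl) | rfl)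
      · exact subset_convexHull ℝ _ (Or.inl (Or.inl (Or.inl rfl)))
      · exact subset_convexHull ℝ _ (Or.inl (Or.inl (Or.inr hx)))
      · exact subset_convexHull ℝ _ (Or.inr rfl)
      · by_cases hm0 : m = 0
        · have ha0 : a = 0 := funext fun i => by rw [ha]; simp [hm0]
          rw [ha0]
          exact subset_convexHull ℝ _ (Or.inl (Or.inl (Or.inl rfl)))
        · refine subset_convexHull ℝ _ (Or.inl (Or.inr ⟨m, by omega, by omega, ?_⟩))
          exact ha
  rcases Nat.eq_zero_or_pos m with hm0 | hmpos
  · -- degenerate case m = 0 : P = S1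
    have ha0 : a = 0 := funext fun i => by rw [ha]; simp [hm0]
    have hunion : (({0} ∪ A ∪ {v}) ∪ {a}) = ({0} ∪ A ∪ {v} : Set (Fin d → ℝ)) := by
      rw [ha0]
      apply Set.union_eq_self_of_subset_right
      rintro x rfl
      exact Or.inl (Or.inl rfl)
    rw [hPd, hunion, ← hS1, hvolS1]
    have hm00 : (m : ℝ) = 0 := by exact_mod_cast congrArg (Nat.cast : ℕ → ℝ) hm0
    rw [hmr] at hm00
    congr 1
    rw [show (k : ℝ) + w - d - 1 = (k : ℝ) by linarith]
  · -- main case : m ≥ 1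
    have hmposr : (0:ℝ) < (m:ℝ) := by exact_mod_cast hmpos
    have hkposz : (0:ℤ) < k := by
      have h1 : (1:ℤ) ≤ (d:ℤ) - 2 := by omega
      have h2 : (1:ℤ) ≤ (m:ℤ) := by exact_mod_cast hmpos
      nlinarith [hkz]
    have hkpos : (0:ℝ) < (k:ℝ) := by exact_mod_cast hkposz
    have hkne : (k:ℝ) ≠ 0 := ne_of_gt hkpos
    have hmne : (m:ℝ) ≠ 0 := ne_of_gt hmposr
    have hcard : (Finset.univ.erase L).card = d - 1 := by
      rw [Finset.card_erase_of_mem (Finset.mem_univ L), Finset.card_univ, Fintype.card_fin]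
    have hcastd1 : ((d - 1 : ℕ) : ℝ) = (d : ℝ) - 1 := by
      rw [Nat.cast_sub (by omega)]; simp
    have hsng : ∀ i : Fin d, i ≠ L →
        ∑ j ∈ Finset.univ.erase L, (Pi.single i 1 : Fin d → ℝ) j = 1 := by
      intro i hi
      simp only [Pi.single_apply]
      rw [Finset.sum_ite_eq' (Finset.univ.erase L) i (fun _ => (1:ℝ)),
        if_pos (Finset.mem_erase.mpr ⟨hi, Finset.mem_univ i⟩)]
    set H : Set (Fin d → ℝ) := {x | (∀ i, i ≠ L → 0 ≤ x i ∧ x L ≤ (k:ℝ) * x i) ∧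
        (k:ℝ) * (∑ i ∈ Finset.univ.erase L, x i) - ((d:ℝ) - 2) * x L ≤ (k:ℝ) ∧
        (m:ℝ) * (∑ i ∈ Finset.univ.erase L, x i) - x L ≤ (m:ℝ)} with hH
    have hHconv : Convex ℝ H := by
      rintro x ⟨hx1, hx2, hx3⟩ y ⟨hy1, hy2, hy3⟩ p q hp hq hpq
      have happ : ∀ i, (p • x + q • y) i = p * x i + q * y i := fun i => by simp
      have hsum : ∑ i ∈ Finset.univ.erase L, (p • x + q • y) i
          = p * (∑ i ∈ Finset.univ.erase L, x i) + q * (∑ i ∈ Finset.univ.erase L, y i) := by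
        simp only [Pi.add_apply, Pi.smul_apply, smul_eq_mul]
        rw [Finset.sum_add_distrib, Finset.mul_sum, Finset.mul_sum]
      refine ⟨fun i hi => ?_, ?_, ?_⟩
      · obtain ⟨ha1, ha2⟩ := hx1 i hi
        obtain ⟨hb1, hb2⟩ := hy1 i hi
        rw [happ i, happ L]
        refine ⟨add_nonneg (mul_nonneg hp ha1) (mul_nonneg hq hb1), ?_⟩
        calc p * x L + q * y L ≤ p * ((k:ℝ) * x i) + q * ((k:ℝ) * y i) :=
              add_le_add (mul_le_mul_of_nonneg_left ha2 hp) (mul_le_mul_of_nonneg_left hb2 hq)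
          _ = (k:ℝ) * (p * x i + q * y i) := by ring
      · rw [hsum, happ L]
        calc (k:ℝ) * (p * (∑ i ∈ Finset.univ.erase L, x i) + q * (∑ i ∈ Finset.univ.erase L, y i))
              - ((d:ℝ) - 2) * (p * x L + q * y L)
            = p * ((k:ℝ) * (∑ i ∈ Finset.univ.erase L, x i) - ((d:ℝ) - 2) * x L)
              + q * ((k:ℝ) * (∑ i ∈ Finset.univ.erase L, y i) - ((d:ℝ) - 2) * y L) := by ring
          _ ≤ p * (k:ℝ) + q * (k:ℝ) :=
              add_le_add (mul_le_mul_of_nonneg_left hx2 hp) (mul_le_mul_of_nonneg_left hy2 hq)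
          _ = (k:ℝ) := by rw [← add_mul, hpq, one_mul]
      · rw [hsum, happ L]
        calc (m:ℝ) * (p * (∑ i ∈ Finset.univ.erase L, x i) + q * (∑ i ∈ Finset.univ.erase L, y i))
              - (p * x L + q * y L)
            = p * ((m:ℝ) * (∑ i ∈ Finset.univ.erase L, x i) - x L)
              + q * ((m:ℝ) * (∑ i ∈ Finset.univ.erase L, y i) - y L) := by ring
          _ ≤ p * (m:ℝ) + q * (m:ℝ) :=
              add_le_add (mul_le_mul_of_nonneg_left hx3 hp) (mul_le_mul_of_nonneg_left hy3 hq)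
          _ = (m:ℝ) := by rw [← add_mul, hpq, one_mul]
    have hVH : (({0} ∪ A ∪ {v}) ∪ {a}) ⊆ H := by
      rintro x (((rfl | ⟨i0, hi0, rfl⟩) | rfl) | rfl)
      · refine ⟨fun i hi => ⟨le_refl _, by simp⟩, ?_, ?_⟩
        · simp only [Pi.zero_apply, Finset.sum_const_zero]
          rw [mul_zero, mul_zero, sub_zero]
          exact hk0r
        · simp only [Pi.zero_apply, Finset.sum_const_zero]
          rw [mul_zero, sub_zero]
          exact hm0r
      · have hi0L : i0 ≠ L := by
          intro hh
          rw [← hiL i0] at hh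
          omega
        refine ⟨fun i hi => ?_, ?_, ?_⟩
        · constructor
          · by_cases hc : i = i0 <;> simp [Pi.single_apply, hc]
          · have hL0 : (Pi.single i0 (1:ℝ) : Fin d → ℝ) L = 0 := by
              simp [Pi.single_apply, Ne.symm hi0L]
            rw [hL0]
            simp only [Pi.single_apply]
            by_cases hc : i = i0
            · rw [if_pos hc, mul_one]
              exact hk0r
            · rw [if_neg hc, mul_zero]
        · rw [hsng i0 hi0L]
          have hL0 : (Pi.single i0 (1:ℝ) : Fin d → ℝ) L = 0 := by
            simp [Pi.single_apply, Ne.symm hi0L]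
          rw [hL0, mul_one, mul_zero, sub_zero]
        · rw [hsng i0 hi0L]
          have hL0 : (Pi.single i0 (1:ℝ) : Fin d → ℝ) L = 0 := by
            simp [Pi.single_apply, Ne.symm hi0L]
          rw [hL0, mul_one, sub_zero]
      · have hvsum : ∑ i ∈ Finset.univ.erase L, v i = (d:ℝ) - 1 := by
          rw [Finset.sum_congr rfl (fun i hi => hvne i (Finset.ne_of_mem_erase hi)),
            Finset.sum_const, hcard, nsmul_eq_mul, hcastd1, mul_one]
        refine ⟨fun i hi => ?_, ?_, ?_⟩
        · rw [hvne i hi, hvL]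
          exact ⟨zero_le_one, by linarith⟩
        · rw [hvsum, hvL]
          have e : (k:ℝ) * ((d:ℝ) - 1) - ((d:ℝ) - 2) * (k:ℝ) = (k:ℝ) := by ring
          linarith
        · rw [hvsum, hvL]
          have e : (m:ℝ) * ((d:ℝ) - 1) = ((d:ℝ) - 2) * (m:ℝ) + (m:ℝ) := by ring
          linarith
      · have hasum : ∑ i ∈ Finset.univ.erase L, a i = 0 := by
          rw [Finset.sum_congr rfl (fun i hi => hane i (Finset.ne_of_mem_erase hi)),
            Finset.sum_const_zero]
        refine ⟨fun i hi => ?_, ?_, ?_⟩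
        · rw [hane i hi, haL]
          refine ⟨le_refl _, ?_⟩
          rw [mul_zero]
          linarith
        · rw [hasum, haL]
          have e : (k:ℝ) * 0 - ((d:ℝ) - 2) * (-(m:ℝ)) = ((d:ℝ) - 2) * (m:ℝ) := by ring
          linarith
        · rw [hasum, haL]
          have e : (m:ℝ) * 0 - (-(m:ℝ)) = (m:ℝ) := by ring
          linarith
    have hHS : H ⊆ S1 ∪ S2 := by
      rintro x ⟨hx1, hx2, hx3⟩
      rcases le_or_gt 0 (x L) with hxL | hxL
      · left
        refine ⟨fun i => if i = L then x L / k else x i - x L / k, ⟨?_, ?_⟩, ?_⟩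
        · intro i
          beta_reduce
          by_cases hc : i = L
          · rw [if_pos hc]
            exact div_nonneg hxL hkpos.le
          · rw [if_neg hc, sub_nonneg, div_le_iff₀ hkpos]
            have := (hx1 i hc).2
            linarith
        · rw [← Finset.add_sum_erase _ _ (Finset.mem_univ L)]
          beta_reduce
          rw [if_pos rfl]
          have hcongr : ∀ i ∈ Finset.univ.erase L,
              (if i = L then x L / (k:ℝ) else x i - x L / k) = x i - x L / k :=
            fun i hi => if_neg (Finset.ne_of_mem_erase hi)
          rw [Finset.sum_congr rfl hcongr, Finset.sum_sub_distrib, Finset.sum_const, hcard,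
            nsmul_eq_mul, hcastd1]
          have hxLk : (k:ℝ) * (x L / k) = x L := by field_simp
          nlinarith [hx2, hkpos, hxLk]
        · rw [Matrix.toLin'_apply]
          funext r
          rw [colMat_mulVec]
          beta_reduce
          by_cases hr : r = L
          · subst hr
            rw [if_pos rfl, if_pos rfl, add_zero, hvL]
            field_simp
          · rw [if_neg hr, if_neg hr, if_pos rfl, hvne r hr]
            ring
      · right
        refine ⟨fun i => if i = L then -(x L) / m else x i, ⟨?_, ?_⟩, ?_⟩
        · intro i
          beta_reduce
          by_cases hc : i = L
          · rw [if_pos hc]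
            have h1 : 0 ≤ -(x L) := by linarith
            exact div_nonneg h1 hmposr.le
          · rw [if_neg hc]
            exact (hx1 i hc).1
        · rw [← Finset.add_sum_erase _ _ (Finset.mem_univ L)]
          beta_reduce
          rw [if_pos rfl]
          have hcongr : ∀ i ∈ Finset.univ.erase L,
              (if i = L then -(x L) / (m:ℝ) else x i) = x i :=
            fun i hi => if_neg (Finset.ne_of_mem_erase hi)
          rw [Finset.sum_congr rfl hcongr]
          have e : (m:ℝ) * (-(x L) / (m:ℝ) + ∑ i ∈ Finset.univ.erase L, x i)
              = (m:ℝ) * (∑ i ∈ Finset.univ.erase L, x i) - x L := by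
            field_simp
            ring
          rw [← mul_le_mul_iff_right₀ hmposr, e, mul_one]
          exact hx3
        · rw [Matrix.toLin'_apply]
          funext r
          rw [colMat_mulVec]
          beta_reduce
          by_cases hr : r = L
          · subst hr
            rw [if_pos rfl, if_pos rfl, add_zero, haL]
            field_simp
          · rw [if_neg hr, if_neg hr, if_pos rfl, hane r hr]
            ring
    have hAfin : A.Finite :=
      Set.Finite.subset (Set.finite_range (fun i : Fin d => (Pi.single i 1 : Fin d → ℝ)))
        (by rintro x ⟨i, _, rfl⟩; exact ⟨i, rfl⟩)
    have hG2fin : (({0} ∪ A ∪ {a}) : Set (Fin d → ℝ)).Finite :=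
      ((Set.finite_singleton 0).union hAfin).union (Set.finite_singleton a)
    have hS2meas : MeasurableSet S2 := by
      rw [hS2]
      exact (hG2fin.isCompact_convexHull ℝ).measurableSet
    have hS1L : ∀ x ∈ S1, 0 ≤ x L := by
      rintro x ⟨c, hc, rfl⟩
      rw [Matrix.toLin'_apply, colMat_mulVec, if_pos rfl, add_zero, hvL]
      exact mul_nonneg hk0r (hc.1 L)
    have hS2L : ∀ x ∈ S2, x L ≤ 0 := by
      rintro x ⟨c, hc, rfl⟩
      rw [Matrix.toLin'_apply, colMat_mulVec, if_pos rfl, add_zero, haL]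
      have := hc.1 L
      nlinarith
    have hker : volume (S1 ∩ S2) = 0 := by
      have hsub : S1 ∩ S2 ⊆
          (↑(LinearMap.ker (LinearMap.proj L : (Fin d → ℝ) →ₗ[ℝ] ℝ)) : Set (Fin d → ℝ)) := by
        rintro x ⟨h1, h2⟩
        simp only [SetLike.mem_coe, LinearMap.mem_ker, LinearMap.proj_apply]
        exact le_antisymm (hS2L x h2) (hS1L x h1)
      have hne : LinearMap.ker (LinearMap.proj L : (Fin d → ℝ) →ₗ[ℝ] ℝ) ≠ ⊤ := by
        intro htop
        have h1 : (Pi.single L 1 : Fin d → ℝ) ∈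
            LinearMap.ker (LinearMap.proj L : (Fin d → ℝ) →ₗ[ℝ] ℝ) := by
          rw [htop]; trivial
        rw [LinearMap.mem_ker, LinearMap.proj_apply] at h1
        simp at h1
      exact le_antisymm
        (le_trans (measure_mono hsub) (Measure.addHaar_submodule volume _ hne).le) zero_le
    have hPSS : Pdwk d w k = S1 ∪ S2 := by
      rw [hPd]
      apply le_antisymm
      · exact le_trans (convexHull_min hVH hHconv) hHS
      · apply Set.union_subset
        · rw [hS1]
          exact convexHull_mono Set.subset_union_left
        · rw [hS2]
          apply convexHull_mono
          rintro x (hx | hx)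
          · exact Or.inl (Or.inl hx)
          · exact Or.inr hx
    rw [hPSS]
    have hadd := measure_union_add_inter (μ := volume) S1 hS2meas
    rw [hker, add_zero] at hadd
    rw [hadd, hvolS1, hvolS2,
      ← ENNReal.ofReal_add (by positivity) (by positivity), ← add_div]
    congr 1
    rw [hmr]
    ring

end
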